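/- Let Δ be an integer with Δ < 0 and Δ ≡ 0 or 1 (mod 4). If there exist coprime integers x and y such that x² + Δ·x·y + ((Δ² − Δ)/4)·y² = 4, then −Δ ∈ {7, 12, 15, 16}. -/

import Mathlib

theorem cyclic_isogeny_degree_4_discriminants
    (Δ : ℤ) (hneg : Δ < 0) (hcong : Δ % 4 = 0 ∨ Δ % 4 = 1)
    (h : ∃ x y : ℤ, Int.gcd x y = 1 ∧
      x ^ 2 + Δ * x * y + ((Δ ^ 2 - Δ) / 4) * y ^ 2 = 4) :
    -Δ ∈ ({7, 12, 15, 16} : Set ℤ) := by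
  obtain ⟨x, y, hg, he⟩ := h
  have hdvd : (4:ℤ) ∣ Δ ^ 2 - Δ := by
    rcases hcong with h0 | h1
    · obtain ⟨k, hk⟩ : (4:ℤ) ∣ Δ := Int.dvd_of_emod_eq_zero h0
      exact ⟨k * Δ - k, by rw [hk]; ring⟩
    · obtain ⟨k, hk⟩ : (4:ℤ) ∣ Δ - 1 := by omega
      exact ⟨Δ * k, by nlinarith⟩
  have hc : Δ ^ 2 - Δ = 4 * ((Δ ^ 2 - Δ) / 4) := (Int.mul_ediv_cancel' hdvd).symm
  have hkey : (2 * x + Δ * y) ^ 2 - Δ * y ^ 2 = 16 := by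
    linear_combination 4 * he + y ^ 2 * hc
  have hx2 : ¬ ((2:ℤ) ∣ x ∧ (2:ℤ) ∣ y) := by
    rintro ⟨hx, hy⟩
    have h2 : (2:ℤ) ∣ (Int.gcd x y : ℤ) := Int.dvd_coe_gcd hx hy
    rw [hg] at h2
    norm_num at h2
  have hΔle : Δ ≤ -3 := by omega
  have hy0 : y ≠ 0 := by
    rintro rfl
    have hx1 : x.natAbs = 1 := by simpa [Int.gcd] using hg
    have : x = 1 ∨ x = -1 := by omega
    rcases this with rfl | rfl <;> norm_num at he
  have hy1 : 1 ≤ y ^ 2 := by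
    rcases lt_or_gt_of_ne hy0 with h | h <;> nlinarith
  have hΔge : -16 ≤ Δ := by nlinarith [sq_nonneg (2 * x + Δ * y)]
  have hyl : -2 ≤ y := by nlinarith [sq_nonneg (2 * x + Δ * y)]
  have hyu : y ≤ 2 := by nlinarith [sq_nonneg (2 * x + Δ * y)]
  obtain ⟨u, hu⟩ : ∃ u : ℤ, u = 2 * x + Δ * y := ⟨_, rfl⟩
  have hul : -4 ≤ u := by nlinarith [sq_nonneg (2 * x + Δ * y + 4)]
  have huu : u ≤ 4 := by nlinarith [sq_nonneg (2 * x + Δ * y - 4)]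
  have hkey2 : u * u - Δ * (y * y) = 16 := by rw [hu]; linear_combination hkey
  clear hkey he hc hdvd hy1
  interval_cases Δ
  all_goals try norm_num [Set.mem_insert_iff, Set.mem_singleton_iff]
  all_goals (interval_cases y <;> interval_cases u <;> omega)
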